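/- arXiv:2504.16478 — 2 statements merged into one kernel-verified Lean document; each statement's English description precedes it below -/
import Mathlib

section
/- Let J be the maximal block Jacobi operator on ℓ²(ℕ, ℂ^d) associated with Jacobi parameters (A_n), (B_n) (A_n invertible, B_n Hermitian). For z ∈ ℂ not an eigenvalue of J, the space GEV_{ℓ²}(z) of square-summable generalized eigenvectors (sequences u with A_{n−1}* u_{n−1} + B_n u_n + A_n u_{n+1} = z u_n for n ≥ 1 and u ∈ ℓ²) has dimension at most d. -/
open Matrix

/-- The formal block Jacobi operator: `(𝒥u)₀ = B₀u₀ + A₀u₁`,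
`(𝒥u)_n = A_{n−1}* u_{n−1} + B_n u_n + A_n u_{n+1}` for `n ≥ 1`. -/
noncomputable def jacobiAct {d : ℕ} (A B : ℕ → Matrix (Fin d) (Fin d) ℂ)
    (u : ℕ → Fin d → ℂ) : ℕ → Fin d → ℂ
  | 0 => (B 0).mulVec (u 0) + (A 0).mulVec (u 1)
  | n + 1 => (A n)ᴴ.mulVec (u n) + (B (n + 1)).mulVec (u (n + 1))
      + (A (n + 1)).mulVec (u (n + 2))

/-- Square-summability of a `ℂ^d`-valued sequence (with the Euclidean norm on `ℂ^d`). -/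
def IsL2 {d : ℕ} (u : ℕ → Fin d → ℂ) : Prop :=
  Memℓp (fun n => (WithLp.equiv 2 (Fin d → ℂ)).symm (u n)) 2

/-- The space `GEV_{ℓ²}(z)` of square-summable generalized eigenvectors. -/
noncomputable def GEVl2 (d : ℕ) (A B : ℕ → Matrix (Fin d) (Fin d) ℂ) (z : ℂ) :
    Submodule ℂ (ℕ → (Fin d → ℂ)) where
  carrier := {u | (∀ n : ℕ, 1 ≤ n → jacobiAct A B u n = z • u n) ∧ IsL2 u}
  add_mem' := by
    rintro u v ⟨hu1, hu2⟩ ⟨hv1, hv2⟩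
    refine ⟨fun n hn => ?_, ?_⟩
    swap
    · have h := hu2.add hv2
      unfold IsL2
      convert h using 1
      funext n
      rfl
    cases n with
    | zero => omega
    | succ m =>
      have hu := hu1 (m + 1) (by omega)
      have hv := hv1 (m + 1) (by omega)
      simp only [jacobiAct, Pi.add_apply, Matrix.mulVec_add, smul_add] at hu hv ⊢
      rw [← hu, ← hv]; abel
  zero_mem' := by
    refine ⟨fun n hn => ?_, ?_⟩
    swap
    · unfold IsL2
      convert (zero_memℓp : Memℓp (0 : ℕ → EuclideanSpace ℂ (Fin d)) 2) using 1
      funext n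
      rfl
    cases n with
    | zero => omega
    | succ m => simp [jacobiAct]
  smul_mem' := by
    rintro c u ⟨hu1, hu2⟩
    refine ⟨fun n hn => ?_, ?_⟩
    swap
    · have h := hu2.const_smul c
      unfold IsL2
      convert h using 1
      funext n
      rfl
    cases n with
    | zero => omega
    | succ m =>
      have hu := hu1 (m + 1) (by omega)
      simp only [jacobiAct, Pi.smul_apply, Matrix.mulVec_smul] at hu ⊢
      rw [smul_comm z c, ← hu]
      simp [smul_add]

/-- If `z` is not an eigenvalue of the maximal block Jacobi operator `J`
(whose domain is `{u ∈ ℓ² : 𝒥u ∈ ℓ²}`), then the space of square-summable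
generalized eigenvectors for `z` has dimension at most `d`. -/
theorem rank_gevl2_le (d : ℕ) (A B : ℕ → Matrix (Fin d) (Fin d) ℂ)
    (hA : ∀ n, IsUnit (A n).det) (hB : ∀ n, (B n).IsHermitian) (z : ℂ)
    (hz : ∀ u : ℕ → Fin d → ℂ, IsL2 u →
      (∀ n, jacobiAct A B u n = z • u n) → u = 0) :
    Module.rank ℂ (GEVl2 d A B z) ≤ d := by
  -- The linear map sending `u` to the residual of the eigenvalue equation at `n = 0`.
  let ψ : GEVl2 d A B z →ₗ[ℂ] (Fin d → ℂ) :=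
    { toFun := fun u => jacobiAct A B u.1 0 - z • u.1 0
      map_add' := by
        rintro ⟨u, hu⟩ ⟨v, hv⟩
        simp only [Submodule.coe_add, jacobiAct, Pi.add_apply, Matrix.mulVec_add, smul_add]
        abel
      map_smul' := by
        rintro c ⟨u, hu⟩
        simp only [Submodule.coe_smul, jacobiAct, Pi.smul_apply, Matrix.mulVec_smul,
          RingHom.id_apply, smul_sub, smul_add]
        rw [smul_comm z c] }
  have hinj : Function.Injective ψ := by
    rw [← LinearMap.ker_eq_bot, LinearMap.ker_eq_bot']
    rintro ⟨u, hu1, hu2⟩ h0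
    have h0' : jacobiAct A B u 0 - z • u 0 = 0 := h0
    have : u = 0 := by
      refine hz u hu2 fun n => ?_
      cases n with
      | zero => have := sub_eq_zero.mp h0'; exact this
      | succ m => exact hu1 (m + 1) (by omega)
    exact Subtype.ext this
  calc Module.rank ℂ (GEVl2 d A B z) ≤ Module.rank ℂ (Fin d → ℂ) :=
        LinearMap.rank_le_of_injective ψ hinj
    _ = d := by simp
end

section
/- Let J be a self-adjoint maximal block Jacobi operator, z ∈ ℂ \ ℝ, and v ∈ Ker W(z) where W(z) := ((J − zI)⁻¹ δ₀(e_j), δ₀(e_i))_{i,j} ∈ M_d(ℂ) is the matrix Weyl coefficient. Then v = 0; i.e., W(z) is invertible. -/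
open Matrix

/-- The sequence `δ₀(v)` with `v` at index `0` and `0` elsewhere. -/
def delta0 {d : ℕ} (v : Fin d → ℂ) : ℕ → Fin d → ℂ :=
  fun n => if n = 0 then v else 0

/-- The `ℓ²` inner product `⟨u, v⟩ = ∑_n ∑_i u_n(i) conj(v_n(i))`
(linear in the first, antilinear in the second argument). -/
noncomputable def ipSeq {d : ℕ} (u v : ℕ → Fin d → ℂ) : ℂ :=
  ∑' n : ℕ, u n ⬝ᵥ star (v n)

lemma jacobiAct_add {d : ℕ} (A B : ℕ → Matrix (Fin d) (Fin d) ℂ) (u v : ℕ → Fin d → ℂ) :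
    jacobiAct A B (u + v) = jacobiAct A B u + jacobiAct A B v := by
  funext n
  cases n with
  | zero => simp [jacobiAct, mulVec_add]; abel
  | succ n => simp [jacobiAct, mulVec_add]; abel

lemma jacobiAct_smul {d : ℕ} (A B : ℕ → Matrix (Fin d) (Fin d) ℂ) (c : ℂ) (u : ℕ → Fin d → ℂ) :
    jacobiAct A B (c • u) = c • jacobiAct A B u := by
  funext n
  cases n with
  | zero => simp [jacobiAct, mulVec_smul, smul_add]
  | succ n => simp [jacobiAct, mulVec_smul, smul_add]

lemma jacobiAct_zero {d : ℕ} (A B : ℕ → Matrix (Fin d) (Fin d) ℂ) :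
    jacobiAct A B 0 = 0 := by
  funext n
  cases n with
  | zero => simp [jacobiAct]
  | succ n => simp [jacobiAct]

lemma jacobiAct_sum {d : ℕ} (A B : ℕ → Matrix (Fin d) (Fin d) ℂ) {ι : Type*} (s : Finset ι)
    (f : ι → ℕ → Fin d → ℂ) :
    jacobiAct A B (∑ j ∈ s, f j) = ∑ j ∈ s, jacobiAct A B (f j) := by
  induction s using Finset.cons_induction with
  | empty => simpa using jacobiAct_zero A B
  | cons a s ha ih => rw [Finset.sum_cons, Finset.sum_cons, jacobiAct_add, ih]

lemma isL2_add {d : ℕ} {u v : ℕ → Fin d → ℂ} (hu : IsL2 u) (hv : IsL2 v) : IsL2 (u + v) := by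
  have h := Memℓp.add hu hv
  unfold IsL2
  convert h using 1
  funext n
  ext i
  simp

lemma isL2_smul {d : ℕ} (c : ℂ) {u : ℕ → Fin d → ℂ} (hu : IsL2 u) : IsL2 (c • u) :=
  Memℓp.const_smul hu c

lemma isL2_zero {d : ℕ} : IsL2 (0 : ℕ → Fin d → ℂ) := zero_memℓp

lemma isL2_sum {d : ℕ} {ι : Type*} (s : Finset ι) (f : ι → ℕ → Fin d → ℂ)
    (hf : ∀ j ∈ s, IsL2 (f j)) : IsL2 (∑ j ∈ s, f j) := by
  induction s using Finset.cons_induction with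
  | empty => simpa using isL2_zero
  | cons a s ha ih =>
    rw [Finset.sum_cons]
    exact isL2_add (hf a (Finset.mem_cons_self a s))
      (ih fun j hj => hf j (Finset.mem_cons_of_mem hj))

lemma isL2_delta0 {d : ℕ} (w : Fin d → ℂ) : IsL2 (delta0 w) := by
  apply memℓp_gen
  apply summable_of_ne_finset_zero (s := {0})
  intro n hn
  simp only [Finset.mem_singleton] at hn
  simp [delta0, hn]


/-- Let `J` be the maximal block Jacobi operator, assumed self-adjoint (equivalently:
symmetric on its maximal domain), and `z ∈ ℂ \ ℝ`. If `v` lies in the kernel of the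
matrix Weyl coefficient `W(z) = (⟨(J − zI)⁻¹δ₀(e_j), δ₀(e_i)⟩)_{i,j}`, then `v = 0`;
i.e. `W(z)` is invertible. -/
theorem weyl_coefficient_ker_eq_bot (d : ℕ) (A B : ℕ → Matrix (Fin d) (Fin d) ℂ)
    (hA : ∀ n, IsUnit (A n).det) (hB : ∀ n, (B n).IsHermitian)
    (hsa : ∀ u v : ℕ → Fin d → ℂ, IsL2 u → IsL2 (jacobiAct A B u) →
      IsL2 v → IsL2 (jacobiAct A B v) →
      ipSeq (jacobiAct A B u) v = ipSeq u (jacobiAct A B v))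
    (z : ℂ) (hz : z.im ≠ 0)
    (R : (ℕ → Fin d → ℂ) → (ℕ → Fin d → ℂ))
    (hR : ∀ f, IsL2 f → IsL2 (R f) ∧ jacobiAct A B (R f) = z • R f + f)
    (v : Fin d → ℂ)
    (hv : (Matrix.of fun i j : Fin d =>
        ipSeq (R (delta0 (Pi.single j 1))) (delta0 (Pi.single i 1))).mulVec v = 0) :
    v = 0 := by
  classical
  set e : Fin d → (ℕ → Fin d → ℂ) := fun j => R (delta0 (Pi.single j 1)) with he
  -- the Weyl matrix entries
  have hW : ∀ i j : Fin d, ipSeq (e j) (delta0 (Pi.single i 1)) = e j 0 i := by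
    intro i j
    unfold ipSeq
    rw [tsum_eq_single 0 (by intro n hn; simp [delta0, hn])]
    simp [delta0, dotProduct, Pi.single_apply, apply_ite, mul_ite]
  set U : ℕ → Fin d → ℂ := ∑ j : Fin d, v j • e j with hUdef
  have heL2 : ∀ j, IsL2 (e j) := fun j => (hR _ (isL2_delta0 _)).1
  have hUL2 : IsL2 U := isL2_sum _ _ fun j _ => isL2_smul _ (heL2 j)
  have hJe : ∀ j, jacobiAct A B (e j) = z • e j + delta0 (Pi.single j 1) :=
    fun j => (hR _ (isL2_delta0 _)).2
  have hs : (∑ j : Fin d, v j • delta0 (Pi.single j (1:ℂ))) = delta0 v := by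
    funext n k
    by_cases hn : n = 0 <;>
      simp [delta0, hn, Finset.sum_apply, Pi.single_apply, mul_ite]
  have hJU : jacobiAct A B U = z • U + delta0 v := by
    rw [hUdef, jacobiAct_sum]
    rw [← hs]
    rw [Finset.smul_sum, ← Finset.sum_add_distrib]
    apply Finset.sum_congr rfl
    intro j _
    rw [jacobiAct_smul, hJe j, smul_add, smul_comm]
  have hU0 : U 0 = 0 := by
    funext i
    have h := congrFun hv i
    simp only [mulVec, dotProduct, Matrix.of_apply, Pi.zero_apply] at h
    rw [hUdef]
    simp only [Finset.sum_apply, Pi.smul_apply, smul_eq_mul, Pi.zero_apply]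
    rw [← h]
    apply Finset.sum_congr rfl
    intro j _
    rw [hW i j, mul_comm]
  have hJL2 : IsL2 (jacobiAct A B U) := by
    rw [hJU]; exact isL2_add (isL2_smul _ hUL2) (isL2_delta0 _)
  have key := hsa U U hUL2 hJL2 hUL2 hJL2
  set S : ℂ := ipSeq U U with hS
  have h1 : ipSeq (jacobiAct A B U) U = z * S := by
    rw [hS]; unfold ipSeq
    rw [← tsum_mul_left, hJU]
    apply tsum_congr; intro n
    by_cases hn : n = 0 <;>
      simp [hn, hU0, delta0, add_dotProduct, smul_dotProduct, smul_eq_mul]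
  have h2 : ipSeq U (jacobiAct A B U) = (starRingEnd ℂ) z * S := by
    rw [hS]; unfold ipSeq
    rw [← tsum_mul_left, hJU]
    apply tsum_congr; intro n
    by_cases hn : n = 0 <;>
      simp [hn, hU0, delta0, dotProduct_add, dotProduct_smul, star_smul, smul_eq_mul,
        Complex.star_def]
  have hS0 : S = 0 := by
    rw [h1, h2] at key
    have hzz : z - (starRingEnd ℂ) z ≠ 0 := by
      intro h
      apply hz
      have := congrArg Complex.im h
      simpa [Complex.sub_im, Complex.conj_im, two_mul] using this
    have : (z - (starRingEnd ℂ) z) * S = 0 := by ring_nf; linear_combination key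
    exact (mul_eq_zero.mp this).resolve_left hzz
  -- now S = ∑' n, ↑(r n) with r n ≥ 0 summable
  set r : ℕ → ℝ := fun n => ∑ k, Complex.normSq (U n k) with hr
  have hrnn : ∀ n, 0 ≤ r n := fun n => Finset.sum_nonneg fun k _ => Complex.normSq_nonneg _
  have hterm : ∀ n, U n ⬝ᵥ star (U n) = (r n : ℂ) := by
    intro n
    rw [hr]
    push_cast
    simp [dotProduct, Complex.mul_conj, Complex.star_def]
  have hrsum : Summable r := by
    have h2 : (0:ℝ) < (2:ENNReal).toReal := by norm_num
    have hsum := hUL2.summable h2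
    convert hsum using 1
    funext n
    rw [hr]
    have hnorm : ‖(WithLp.equiv 2 (Fin d → ℂ)).symm (U n)‖
        = Real.sqrt (∑ k, ‖U n k‖ ^ 2) := EuclideanSpace.norm_eq _
    rw [hnorm]
    have : ((2:ENNReal).toReal) = (2:ℝ) := by norm_num
    rw [this, Real.rpow_two, Real.sq_sqrt (Finset.sum_nonneg fun k _ => sq_nonneg _)]
    apply Finset.sum_congr rfl
    intro k _
    rw [← Complex.sq_norm]
  have hrt : (∑' n, r n) = 0 := by
    have : ((∑' n, r n : ℝ) : ℂ) = S := by
      rw [Complex.ofReal_tsum, hS]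
      unfold ipSeq
      exact tsum_congr fun n => (hterm n).symm
    rw [hS0] at this
    exact_mod_cast this
  have hU : ∀ n, U n = 0 := by
    intro n
    have hrn : r n = 0 := by
      refine le_antisymm ?_ (hrnn n)
      calc r n ≤ ∑' m, r m := Summable.le_tsum hrsum n fun j _ => hrnn j
        _ = 0 := hrt
    funext k
    have := (Finset.sum_eq_zero_iff_of_nonneg
      (fun k _ => Complex.normSq_nonneg (U n k))).mp hrn k (Finset.mem_univ k)
    exact Complex.normSq_eq_zero.mp this
  have hUzero : U = 0 := funext hU
  have : delta0 v = 0 := by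
    have h := hJU
    rw [hUzero, jacobiAct_zero, smul_zero, zero_add] at h
    exact h.symm
  have := congrFun this 0
  simpa [delta0] using this
end
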